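/- arXiv:1705.00088 — 2 statements merged into one kernel-verified Lean document; each statement's English description precedes it below -/
import Mathlib

section
/- Let n, k ≥ 1, let Γ be a subgroup of the orthogonal group O(n) whose fixed-point set Fix Γ = {x ∈ ℝⁿ : γx = x for all γ ∈ Γ} equals {0}, and let K : ℝⁿ → ℝ^{k×k} be a matrix-valued kernel whose entries K_{ij} and x ↦ ‖x‖²K_{ij}(x) are integrable, with K(γx) = K(x) for all x and all γ ∈ Γ. Assume the matrix I_k + ∫_{ℝⁿ} K(x) dx has nontrivial kernel. Then the function 𝒟(ξ) = det(I_k + K̂(ξ)), where K̂(ξ) = ∫ K(x)e^{−i⟨ξ,x⟩} dx is the entrywise Fourier transform, is twice continuously differentiable on ℝⁿ, and satisfies 𝒟(0) = 0 and D𝒟(0) = 0 (the derivative of 𝒟 at the origin vanishes). -/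
open MeasureTheory Matrix Real FourierTransform
open scoped RealInnerProductSpace

noncomputable section

namespace FourierDetAux

variable {n : ℕ}

lemma key_rewrite (g : EuclideanSpace ℝ (Fin n) → ℝ) :
    (fun ξ : EuclideanSpace ℝ (Fin n) =>
        ∫ x, (g x : ℂ) * Complex.exp (-Complex.I * (⟪ξ, x⟫ : ℂ))) =
      fun ξ => 𝓕 (fun x => (g x : ℂ)) ((2 * π)⁻¹ • ξ) := by
  funext ξ
  rw [Real.fourier_eq']
  congr 1
  funext x
  rw [smul_eq_mul, mul_comm]
  congr 1
  have h1 : (-2 * π * ⟪x, (2 * π)⁻¹ • ξ⟫ : ℝ) = -⟪ξ, x⟫ := by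
    rw [real_inner_smul_right, real_inner_comm]
    field_simp
  rw [h1]
  push_cast
  ring

lemma entry_contDiff (g : EuclideanSpace ℝ (Fin n) → ℝ)
    (h0 : Integrable g) (h2 : Integrable fun x => ‖x‖ ^ 2 * g x) :
    ContDiff ℝ 2 (fun ξ : EuclideanSpace ℝ (Fin n) =>
      ∫ x, (g x : ℂ) * Complex.exp (-Complex.I * (⟪ξ, x⟫ : ℂ))) := by
  rw [key_rewrite]
  have h2n : Integrable (fun v : EuclideanSpace ℝ (Fin n) => ‖v‖ ^ 2 * ‖g v‖) := by
    simpa [norm_mul, norm_pow, norm_norm] using h2.norm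
  have hint : ∀ m : ℕ, (m : ℕ∞) ≤ 2 →
      Integrable (fun v : EuclideanSpace ℝ (Fin n) => ‖v‖ ^ m * ‖(g v : ℂ)‖) := by
    intro m hm
    have hm2 : m ≤ 2 := by exact_mod_cast hm
    simp only [Complex.norm_real]
    interval_cases m
    · simpa using h0.norm
    · refine (h0.norm.add h2n).mono' ?_ (Filter.Eventually.of_forall fun v => ?_)
      · exact (continuous_norm.pow 1).aestronglyMeasurable.mul h0.norm.1
      · have hb : ‖v‖ ≤ 1 + ‖v‖ ^ 2 := by
          nlinarith [sq_nonneg (‖v‖ - 1), norm_nonneg (v : EuclideanSpace ℝ (Fin n))]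
        have h3 := mul_le_mul_of_nonneg_right hb (norm_nonneg (g v))
        rw [Real.norm_eq_abs, abs_of_nonneg (by positivity)]
        rw [pow_one]
        simp only [Pi.add_apply]
        nlinarith
    · exact h2n
  exact (Real.contDiff_fourier hint).comp (contDiff_id.const_smul _)

end FourierDetAux

end

open FourierDetAux

/-- For a `Γ`-invariant matrix kernel `K : ℝⁿ → ℝ^{k×k}` with integrable
entries and second moments, where `Γ` is a subgroup of the orthogonal group with trivial
fixed-point set, if `I + ∫K` has nontrivial kernel then the Fourier determinant
`𝒟(ξ) = det(I + K̂(ξ))` is `C²` and satisfies `𝒟(0) = 0` and `D𝒟(0) = 0`. -/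
theorem fourier_determinant_double_root (n k : ℕ) (hn : 1 ≤ n) (hk : 1 ≤ k)
    (Γ : Subgroup (EuclideanSpace ℝ (Fin n) ≃ₗᵢ[ℝ] EuclideanSpace ℝ (Fin n)))
    (hfix : ∀ x : EuclideanSpace ℝ (Fin n), (∀ γ ∈ Γ, γ x = x) → x = 0)
    (K : EuclideanSpace ℝ (Fin n) → Matrix (Fin k) (Fin k) ℝ)
    (hK : ∀ i j, Integrable (fun x => K x i j))
    (hK2 : ∀ i j, Integrable (fun x => ‖x‖ ^ 2 * K x i j))
    (hsym : ∀ γ ∈ Γ, ∀ x, K (γ x) = K x)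
    (hker : ∃ v : Fin k → ℝ, v ≠ 0 ∧
      ((1 : Matrix (Fin k) (Fin k) ℝ) + Matrix.of fun i j => ∫ x, K x i j).mulVec v = 0) :
    ContDiff ℝ 2 (fun ξ : EuclideanSpace ℝ (Fin n) =>
      ((1 : Matrix (Fin k) (Fin k) ℂ) + Matrix.of fun i j =>
        ∫ x, (K x i j : ℂ) * Complex.exp (-Complex.I * (⟪ξ, x⟫ : ℂ))).det) ∧
    ((1 : Matrix (Fin k) (Fin k) ℂ) + Matrix.of fun i j =>
        ∫ x, (K x i j : ℂ) * Complex.exp (-Complex.I * (⟪(0 : EuclideanSpace ℝ (Fin n)), x⟫ : ℂ))).det = 0 ∧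
    fderiv ℝ (fun ξ : EuclideanSpace ℝ (Fin n) =>
      ((1 : Matrix (Fin k) (Fin k) ℂ) + Matrix.of fun i j =>
        ∫ x, (K x i j : ℂ) * Complex.exp (-Complex.I * (⟪ξ, x⟫ : ℂ))).det) 0 = 0 := by
  set D : EuclideanSpace ℝ (Fin n) → ℂ := fun ξ =>
      ((1 : Matrix (Fin k) (Fin k) ℂ) + Matrix.of fun i j =>
        ∫ x, (K x i j : ℂ) * Complex.exp (-Complex.I * (⟪ξ, x⟫ : ℂ))).det with hD
  -- Part 1 : C²
  have hent : ∀ i j, ContDiff ℝ 2 (fun ξ : EuclideanSpace ℝ (Fin n) =>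
      ∫ x, (K x i j : ℂ) * Complex.exp (-Complex.I * (⟪ξ, x⟫ : ℂ))) := fun i j =>
    entry_contDiff _ (hK i j) (hK2 i j)
  have hC2 : ContDiff ℝ 2 D := by
    have hrw : D = fun ξ => ∑ σ : Equiv.Perm (Fin k),
        ((Equiv.Perm.sign σ : ℤ) : ℂ) * ∏ i, ((if σ i = i then (1:ℂ) else 0) +
          ∫ x, (K x (σ i) i : ℂ) * Complex.exp (-Complex.I * (⟪ξ, x⟫ : ℂ))) := by
      funext ξ
      simp only [hD]
      rw [Matrix.det_apply']
      refine Finset.sum_congr rfl fun σ _ => ?_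
      refine congrArg _ (Finset.prod_congr rfl fun i _ => ?_)
      simp [Matrix.one_apply]
    rw [hrw]
    refine ContDiff.sum fun σ _ => ContDiff.mul contDiff_const ?_
    exact contDiff_prod fun i _ => ContDiff.add contDiff_const (hent (σ i) i)
  refine ⟨hC2, ?_, ?_⟩
  -- Part 2 : D 0 = 0
  · obtain ⟨v, hv, hmul⟩ := hker
    have hdetR : ((1 : Matrix (Fin k) (Fin k) ℝ) +
        Matrix.of fun i j => ∫ x, K x i j).det = 0 :=
      Matrix.exists_mulVec_eq_zero_iff.mp ⟨v, hv, hmul⟩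
    have hmat : ((1 : Matrix (Fin k) (Fin k) ℂ) + Matrix.of fun i j =>
        ∫ x, (K x i j : ℂ) * Complex.exp (-Complex.I *
          (⟪(0 : EuclideanSpace ℝ (Fin n)), x⟫ : ℂ))) =
        Complex.ofRealHom.mapMatrix ((1 : Matrix (Fin k) (Fin k) ℝ) +
          Matrix.of fun i j => ∫ x, K x i j) := by
      ext i j
      have he : ∀ x : EuclideanSpace ℝ (Fin n),
          (K x i j : ℂ) * Complex.exp (-Complex.I *
            (⟪(0 : EuclideanSpace ℝ (Fin n)), x⟫ : ℂ)) = (K x i j : ℂ) := by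
        intro x
        simp [inner_zero_left]
      have hio : ∫ x : EuclideanSpace ℝ (Fin n), ((K x i j : ℝ) : ℂ)
          = ((∫ x, K x i j : ℝ) : ℂ) := by
        simpa using Complex.ofRealCLM.integral_comp_comm (hK i j)
      simp only [RingHom.mapMatrix_apply, Matrix.add_apply, Matrix.map_apply,
        Matrix.of_apply, he, hio]
      simp [Matrix.one_apply, apply_ite]
    rw [hmat, ← RingHom.map_det, hdetR, map_zero]
  -- Part 3 : fderiv vanishes
  · have hDdiff : DifferentiableAt ℝ D 0 :=
      (hC2.differentiable (by norm_num)).differentiableAt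
    have hinv : ∀ γ ∈ Γ, ∀ ξ : EuclideanSpace ℝ (Fin n), D (γ ξ) = D ξ := by
      intro γ hγ ξ
      simp only [hD]
      have hentinv : ∀ i j,
          (∫ x, (K x i j : ℂ) * Complex.exp (-Complex.I * (⟪γ ξ, x⟫ : ℂ)))
          = ∫ x, (K x i j : ℂ) * Complex.exp (-Complex.I * (⟪ξ, x⟫ : ℂ)) := by
        intro i j
        have hcv := (γ.measurePreserving).integral_comp
          γ.toHomeomorph.measurableEmbedding
          (fun y : EuclideanSpace ℝ (Fin n) =>
            (K y i j : ℂ) * Complex.exp (-Complex.I * (⟪γ ξ, y⟫ : ℂ)))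
        rw [← hcv]
        congr 1
        funext x
        rw [hsym γ hγ x, γ.inner_map_map]
      simp only [hentinv]
    have hL : ∀ γ ∈ Γ, ∀ h : EuclideanSpace ℝ (Fin n),
        fderiv ℝ D 0 (γ h) = fderiv ℝ D 0 h := by
      intro γ hγ h
      have h1 : HasFDerivAt (fun ξ : EuclideanSpace ℝ (Fin n) => γ ξ)
          (γ.toContinuousLinearEquiv :
            EuclideanSpace ℝ (Fin n) →L[ℝ] EuclideanSpace ℝ (Fin n)) 0 :=
        γ.toContinuousLinearEquiv.hasFDerivAt
      have h2 : HasFDerivAt D (fderiv ℝ D 0)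
          ((fun ξ : EuclideanSpace ℝ (Fin n) => γ ξ) 0) := by
        simp only [map_zero]
        exact hDdiff.hasFDerivAt
      have hcomp := (h2.comp (0 : EuclideanSpace ℝ (Fin n)) h1).fderiv
      have hfun : D ∘ ⇑γ = D := funext fun ξ => hinv γ hγ ξ
      rw [hfun] at hcomp
      have := congrArg (fun T : EuclideanSpace ℝ (Fin n) →L[ℝ] ℂ => T h) hcomp
      simpa using this.symm
    set L := fderiv ℝ D 0 with hLdef
    have key : ∀ T : ℂ →L[ℝ] ℝ,
        (InnerProductSpace.toDual ℝ (EuclideanSpace ℝ (Fin n))).symm (T.comp L) = 0 := by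
      intro T
      set u := (InnerProductSpace.toDual ℝ (EuclideanSpace ℝ (Fin n))).symm (T.comp L) with hu
      have hinner : ∀ h : EuclideanSpace ℝ (Fin n), ⟪u, h⟫ = T (L h) := by
        intro h
        rw [hu, InnerProductSpace.toDual_symm_apply]
        rfl
      refine hfix u fun γ hγ => ?_
      refine ext_inner_right ℝ fun x => ?_
      calc ⟪γ u, x⟫ = ⟪γ u, γ (γ.symm x)⟫ := by rw [γ.apply_symm_apply]
        _ = ⟪u, γ.symm x⟫ := γ.inner_map_map _ _
        _ = T (L (γ.symm x)) := hinner _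
        _ = T (L (γ (γ.symm x))) := by rw [hL γ hγ (γ.symm x)]
        _ = T (L x) := by rw [γ.apply_symm_apply]
        _ = ⟪u, x⟫ := (hinner x).symm
    have hre := key Complex.reCLM
    have him := key Complex.imCLM
    refine ContinuousLinearMap.ext fun h => ?_
    have h1 : (L h).re = 0 := by
      have e := InnerProductSpace.toDual_symm_apply (𝕜 := ℝ)
        (x := h) (y := Complex.reCLM.comp L)
      rw [hre] at e
      simpa using e.symm
    have h2 : (L h).im = 0 := by
      have e := InnerProductSpace.toDual_symm_apply (𝕜 := ℝ)
        (x := h) (y := Complex.imCLM.comp L)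
      rw [him] at e
      simpa using e.symm
    have hz : L h = 0 := Complex.ext h1 h2
    simpa using hz
end

section
/- Let n ≥ 1 and let Γ be a subgroup of the orthogonal group O(n) whose fixed-point set Fix Γ = {x ∈ ℝⁿ : γx = x for all γ ∈ Γ} equals {0}. Let v : ℝⁿ → ℝ be differentiable, radially symmetric in the sense that v(ρx) = v(x) for every ρ ∈ O(n) and every x ∈ ℝⁿ, and not constant. If a ∈ ℝⁿ satisfies ⟨a, ∇v(γx)⟩ = ⟨a, ∇v(x)⟩ for all γ ∈ Γ and all x ∈ ℝⁿ, then a = 0. -/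
open scoped RealInnerProductSpace

section Aux

variable {E : Type*} [NormedAddCommGroup E] [InnerProductSpace ℝ E] [CompleteSpace E]

/-- Chain rule for gradient under a linear isometry equivalence, for an invariant function. -/
lemma gradient_comp_isometry (v : E → ℝ) (hv : Differentiable ℝ v)
    (ρ : E ≃ₗᵢ[ℝ] E) (hrad : ∀ y, v (ρ y) = v y) (x : E) :
    gradient v (ρ x) = ρ (gradient v x) := by
  have h1 : HasFDerivAt v (fderiv ℝ v (ρ x)) (ρ x) := (hv (ρ x)).hasFDerivAt
  have h2 : HasFDerivAt (v ∘ ρ) ((fderiv ℝ v (ρ x)).comp (ρ.toLinearIsometry.toContinuousLinearMap)) x :=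
    h1.comp x (ρ.toLinearIsometry.toContinuousLinearMap.hasFDerivAt)
  have hve : v ∘ ρ = v := funext hrad
  rw [hve] at h2
  have h3 : fderiv ℝ v x = (fderiv ℝ v (ρ x)).comp ρ.toLinearIsometry.toContinuousLinearMap :=
    h2.fderiv
  -- use inner characterization
  have key : ∀ h : E, ⟪gradient v x, h⟫ = ⟪ρ.symm (gradient v (ρ x)), h⟫ := by
    intro h
    have e1 : fderiv ℝ v x h = ⟪gradient v x, h⟫ := by
      have t := (hv x).hasGradientAt
      rw [hasGradientAt_iff_hasFDerivAt] at t
      rw [t.fderiv]; rfl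
    have e2 : fderiv ℝ v (ρ x) (ρ h) = ⟪gradient v (ρ x), ρ h⟫ := by
      have t := (hv (ρ x)).hasGradientAt
      rw [hasGradientAt_iff_hasFDerivAt] at t
      rw [t.fderiv]; rfl
    have e3 : fderiv ℝ v x h = fderiv ℝ v (ρ x) (ρ h) := by rw [h3]; rfl
    rw [← e1, e3, e2]
    rw [← ρ.inner_map_map (ρ.symm (gradient v (ρ x))) h, ρ.apply_symm_apply]
  have : gradient v x = ρ.symm (gradient v (ρ x)) :=
    ext_inner_left ℝ fun h => by rw [real_inner_comm, key h, real_inner_comm]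
  rw [this, ρ.apply_symm_apply]

end Aux

/-- If `Γ` is a subgroup of the orthogonal group with trivial fixed-point
set, `v` is a differentiable, radially symmetric, nonconstant function on ℝⁿ, and `a`
satisfies `⟨a, ∇v(γx)⟩ = ⟨a, ∇v(x)⟩` for all `γ ∈ Γ` and all `x`, then `a = 0`. -/
theorem no_invariant_kernel_element (n : ℕ) (hn : 1 ≤ n)
    (Γ : Subgroup (EuclideanSpace ℝ (Fin n) ≃ₗᵢ[ℝ] EuclideanSpace ℝ (Fin n)))
    (hfix : ∀ x : EuclideanSpace ℝ (Fin n), (∀ γ ∈ Γ, γ x = x) → x = 0)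
    (v : EuclideanSpace ℝ (Fin n) → ℝ) (hv : Differentiable ℝ v)
    (hrad : ∀ (ρ : EuclideanSpace ℝ (Fin n) ≃ₗᵢ[ℝ] EuclideanSpace ℝ (Fin n))
      (x : EuclideanSpace ℝ (Fin n)), v (ρ x) = v x)
    (hnc : ¬∃ c : ℝ, ∀ x, v x = c)
    (a : EuclideanSpace ℝ (Fin n))
    (ha : ∀ γ ∈ Γ, ∀ x, ⟪a, gradient v (γ x)⟫ = ⟪a, gradient v x⟫) :
    a = 0 := by
  let E := EuclideanSpace ℝ (Fin n)
  -- there is a point with nonzero gradient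
  obtain ⟨x₀, hx₀⟩ : ∃ x₀ : E, gradient v x₀ ≠ 0 := by
    by_contra h
    push_neg at h
    apply hnc
    refine ⟨v 0, fun x => ?_⟩
    apply is_const_of_fderiv_eq_zero hv
    intro y
    have t := (hv y).hasGradientAt
    rw [hasGradientAt_iff_hasFDerivAt] at t
    rw [t.fderiv, h y]
    ext w
    simp
  set g₀ := gradient v x₀ with hg₀
  -- for each γ ∈ Γ, γ⁻¹ a = a
  have hkey : ∀ γ ∈ Γ, (γ : E ≃ₗᵢ[ℝ] E).symm a = a := by
    intro γ hγ
    set d : E := (γ : E ≃ₗᵢ[ℝ] E).symm a - a with hd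
    have hd0 : ∀ x : E, ⟪d, gradient v x⟫ = 0 := by
      intro x
      have h1 := ha γ hγ x
      have h2 : gradient v ((γ : E ≃ₗᵢ[ℝ] E) x) = (γ : E ≃ₗᵢ[ℝ] E) (gradient v x) :=
        gradient_comp_isometry v hv _ (fun y => hrad _ y) x
      rw [h2] at h1
      have h3 : ⟪a, (γ : E ≃ₗᵢ[ℝ] E) (gradient v x)⟫
          = ⟪(γ : E ≃ₗᵢ[ℝ] E).symm a, gradient v x⟫ := by
        rw [← (γ : E ≃ₗᵢ[ℝ] E).inner_map_map ((γ : E ≃ₗᵢ[ℝ] E).symm a) (gradient v x),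
          (γ : E ≃ₗᵢ[ℝ] E).apply_symm_apply]
      rw [h3] at h1
      rw [hd, inner_sub_left, h1, sub_self]
    by_contra hdne
    have hdne' : d ≠ 0 := fun h => hdne (by rwa [hd, sub_eq_zero] at h)
    -- find a reflection mapping g₀ to (‖g₀‖/‖d‖) • d
    set w : E := (‖g₀‖ / ‖d‖) • d with hw
    have hnorm : ‖g₀‖ = ‖w‖ := by
      rw [hw, norm_smul, norm_div, norm_norm, norm_norm,
        div_mul_cancel₀ _ (norm_ne_zero_iff.mpr hdne')]
    have href := Submodule.reflection_sub (F := E) hnorm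
    set ρ : E ≃ₗᵢ[ℝ] E := Submodule.reflection (ℝ ∙ (g₀ - w))ᗮ with hρ
    have : gradient v (ρ x₀) = ρ g₀ :=
      gradient_comp_isometry v hv ρ (fun y => hrad ρ y) x₀
    have hzero := hd0 (ρ x₀)
    rw [this, href] at hzero
    rw [hw, real_inner_smul_right, real_inner_self_eq_norm_sq] at hzero
    have : (‖g₀‖ / ‖d‖) * ‖d‖ ^ 2 ≠ 0 := by
      apply mul_ne_zero
      · exact div_ne_zero (norm_ne_zero_iff.mpr hx₀) (norm_ne_zero_iff.mpr hdne')
      · exact pow_ne_zero _ (norm_ne_zero_iff.mpr hdne')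
    exact this hzero
  -- conclude a is fixed by all of Γ
  apply hfix
  intro γ hγ
  exact hkey γ⁻¹ (inv_mem hγ)
end
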